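/- arXiv:1701.01560 — 3 statements merged into one kernel-verified Lean document; each statement's English description precedes it below -/
import Mathlib

section
/- For every y ∈ ℝ, the function G is differentiable at y with G′(y) = φ(y)·(Φ(x) − Φ((x − ρy)/√(1−ρ²))). In particular, G′(y*) = 0. -/
open MeasureTheory Real

/-- The standard normal density `φ(u) = (2π)^{-1/2} exp(-u²/2)`. -/
noncomputable def stdNormalPDF (u : ℝ) : ℝ := (Real.sqrt (2 * π))⁻¹ * Real.exp (-u ^ 2 / 2)

/-- The standard normal CDF `Φ(x) = ∫_{-∞}^x φ(u) du`. -/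
noncomputable def stdNormalCDF (x : ℝ) : ℝ := ∫ u in Set.Iic x, stdNormalPDF u

/-- `G(y) = Φ(x)Φ(y) − ∫_{−∞}^{y} Φ((x − ρu)/√(1−ρ²)) φ(u) du`. -/
noncomputable def Gfun (ρ x y : ℝ) : ℝ :=
  stdNormalCDF x * stdNormalCDF y
    - ∫ u in Set.Iic y, stdNormalCDF ((x - ρ * u) / Real.sqrt (1 - ρ ^ 2)) * stdNormalPDF u

/-- `y* = x(1 − √(1−ρ²))/ρ`. -/
noncomputable def ystar (ρ x : ℝ) : ℝ := x * (1 - Real.sqrt (1 - ρ ^ 2)) / ρ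

lemma continuous_pdf : Continuous stdNormalPDF := by
  unfold stdNormalPDF; fun_prop

lemma pdf_nonneg (u : ℝ) : 0 ≤ stdNormalPDF u := by
  unfold stdNormalPDF; positivity

lemma integrable_pdf : Integrable stdNormalPDF := by
  have h : Integrable (fun u : ℝ => (Real.sqrt (2 * π))⁻¹ * Real.exp (-(1/2) * u ^ 2)) :=
    (integrable_exp_neg_mul_sq (by norm_num : (0:ℝ) < 1/2)).const_mul _
  have he : stdNormalPDF = fun u : ℝ => (Real.sqrt (2 * π))⁻¹ * Real.exp (-(1/2) * u ^ 2) := by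
    funext u; unfold stdNormalPDF; ring_nf
  rw [he]; exact h

lemma hasDerivAt_Iic (f : ℝ → ℝ) (hf : Integrable f) (hc : Continuous f) (y : ℝ) :
    HasDerivAt (fun t => ∫ u in Set.Iic t, f u) (f y) y := by
  have key : (fun t => ∫ u in Set.Iic t, f u)
      = fun t => (∫ u in Set.Iic (0:ℝ), f u) + ∫ u in (0:ℝ)..t, f u := by
    funext t
    rw [add_comm, ← sub_eq_iff_eq_add]
    exact intervalIntegral.integral_Iic_sub_Iic hf.integrableOn hf.integrableOn
  rw [key]
  exact (intervalIntegral.integral_hasDerivAt_right hf.intervalIntegrable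
    (hc.stronglyMeasurableAtFilter _ _) hc.continuousAt).const_add _

lemma hasDerivAt_cdf (y : ℝ) : HasDerivAt stdNormalCDF (stdNormalPDF y) y :=
  hasDerivAt_Iic stdNormalPDF integrable_pdf continuous_pdf y

lemma continuous_cdf : Continuous stdNormalCDF :=
  continuous_iff_continuousAt.2 fun y => (hasDerivAt_cdf y).continuousAt

lemma cdf_nonneg (t : ℝ) : 0 ≤ stdNormalCDF t :=
  setIntegral_nonneg measurableSet_Iic fun u _ => pdf_nonneg u

lemma cdf_le (t : ℝ) : stdNormalCDF t ≤ ∫ u, stdNormalPDF u :=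
  setIntegral_le_integral integrable_pdf (Filter.Eventually.of_forall pdf_nonneg)

/-- For `ρ ∈ (−1,1)`, `ρ ≠ 0`, `x ∈ ℝ`: for every `y`, `G` is
differentiable at `y` with `G′(y) = φ(y)·(Φ(x) − Φ((x − ρy)/√(1−ρ²)))`; in particular
`G′(y*) = 0`. -/
theorem stmt3 (ρ x : ℝ) (hρ : ρ ∈ Set.Ioo (-1 : ℝ) 1) (hρ0 : ρ ≠ 0) :
    (∀ y : ℝ, HasDerivAt (Gfun ρ x)
        (stdNormalPDF y * (stdNormalCDF x - stdNormalCDF ((x - ρ * y) / Real.sqrt (1 - ρ ^ 2)))) y)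
    ∧ HasDerivAt (Gfun ρ x) 0 (ystar ρ x) := by
  set s := Real.sqrt (1 - ρ ^ 2) with hs
  set g : ℝ → ℝ := fun u => stdNormalCDF ((x - ρ * u) / s) * stdNormalPDF u with hg
  have hgc : Continuous g := by
    apply Continuous.mul _ continuous_pdf
    exact continuous_cdf.comp (by fun_prop)
  have hgi : Integrable g := by
    set C := ∫ u, stdNormalPDF u with hC
    refine (integrable_pdf.const_mul C).mono hgc.aestronglyMeasurable ?_
    refine Filter.Eventually.of_forall fun u => ?_
    have h1 : 0 ≤ g u := mul_nonneg (cdf_nonneg _) (pdf_nonneg u)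
    have h2 : g u ≤ C * stdNormalPDF u :=
      mul_le_mul_of_nonneg_right (cdf_le _) (pdf_nonneg u)
    have hC0 : 0 ≤ C * stdNormalPDF u := le_trans h1 h2
    rw [Real.norm_eq_abs, Real.norm_eq_abs, abs_of_nonneg h1, abs_of_nonneg hC0]
    exact h2
  have main : ∀ y : ℝ, HasDerivAt (Gfun ρ x)
      (stdNormalPDF y * (stdNormalCDF x - stdNormalCDF ((x - ρ * y) / s))) y := by
    intro y
    have h1 : HasDerivAt (fun t => stdNormalCDF x * stdNormalCDF t)
        (stdNormalCDF x * stdNormalPDF y) y := (hasDerivAt_cdf y).const_mul _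
    have h2 : HasDerivAt (fun t => ∫ u in Set.Iic t, g u) (g y) y :=
      hasDerivAt_Iic g hgi hgc y
    have := h1.sub h2
    convert this using 1
    · rfl
    · rfl
    · rfl
    simp only [hg]
    ring
  refine ⟨main, ?_⟩
  have hs0 : 0 < 1 - ρ ^ 2 := by
    obtain ⟨h1, h2⟩ := hρ
    nlinarith
  have hspos : 0 < s := Real.sqrt_pos.2 hs0
  have hkey : (x - ρ * ystar ρ x) / s = x := by
    rw [ystar]
    field_simp
    ring
  have := main (ystar ρ x)
  rw [hkey] at this
  simpa using this
end

section
/- For every ρ ∈ (−1,1) with ρ ≠ 0 and every x ∈ ℝ, (1−ρ²)^{−3/2} ∫_{−∞}^{y*} (ρx − u) φ((x − ρu)/√(1−ρ²)) φ(u) du = (1/(2π)) (1−ρ²)^{−1/2} exp(−x² h(ρ)), where y* = x(1 − √(1−ρ²))/ρ and h(ρ) = (1 − √(1−ρ²))/ρ². -/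
open MeasureTheory Real

/-- `h(ρ) = (1 − √(1−ρ²))/ρ²`. -/
noncomputable def hfun (ρ : ℝ) : ℝ := (1 - Real.sqrt (1 - ρ ^ 2)) / ρ ^ 2

set_option maxHeartbeats 1000000 in
/-- For every `ρ ∈ (−1,1)` with `ρ ≠ 0` and every `x ∈ ℝ`,
`(1−ρ²)^{−3/2} ∫_{−∞}^{y*} (ρx − u) φ((x − ρu)/√(1−ρ²)) φ(u) du
  = (2π)⁻¹ (1−ρ²)^{−1/2} exp(−x² h(ρ))`. -/
theorem stmt11 (ρ x : ℝ) (hρ : ρ ∈ Set.Ioo (-1 : ℝ) 1) (hρ0 : ρ ≠ 0) :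
    (1 - ρ ^ 2) ^ (-(3 : ℝ) / 2) *
        ∫ u in Set.Iic (ystar ρ x),
          (ρ * x - u) * stdNormalPDF ((x - ρ * u) / Real.sqrt (1 - ρ ^ 2)) * stdNormalPDF u
      = (2 * π)⁻¹ * (1 - ρ ^ 2) ^ (-(1 : ℝ) / 2) * Real.exp (-x ^ 2 * hfun ρ) := by
  obtain ⟨h1, h2⟩ := hρ
  have hs2 : (0:ℝ) < 1 - ρ ^ 2 := by nlinarith
  have hπ : (0:ℝ) < 2 * π := by positivity
  set s := Real.sqrt (1 - ρ ^ 2) with hs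
  have hs0 : 0 < s := Real.sqrt_pos.mpr hs2
  have hssq : s ^ 2 = 1 - ρ ^ 2 := Real.sq_sqrt hs2.le
  set b : ℝ := 1 / (2 * (1 - ρ ^ 2)) with hb
  have hbpos : 0 < b := by positivity
  set C : ℝ := (2 * π)⁻¹ * Real.exp (-x ^ 2 / 2) with hC
  set F : ℝ → ℝ := fun u => (1 - ρ ^ 2) * C * Real.exp (-b * (u - ρ * x) ^ 2) with hF
  -- pointwise identity: integrand = C * (ρx - u) * exp(-b (u-ρx)^2)
  have hpt : ∀ u : ℝ, (ρ * x - u) * stdNormalPDF ((x - ρ * u) / s) * stdNormalPDF u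
      = C * ((ρ * x - u) * Real.exp (-b * (u - ρ * x) ^ 2)) := by
    intro u
    unfold stdNormalPDF
    have hsqrt : (Real.sqrt (2 * π))⁻¹ * (Real.sqrt (2 * π))⁻¹ = (2 * π)⁻¹ := by
      rw [← mul_inv, Real.mul_self_sqrt hπ.le]
    have hexp : -((x - ρ * u) / s) ^ 2 / 2 + -u ^ 2 / 2
        = -x ^ 2 / 2 + -b * (u - ρ * x) ^ 2 := by
      rw [div_pow, hssq, hb]
      field_simp
      ring
    calc (ρ * x - u) * ((Real.sqrt (2 * π))⁻¹ * Real.exp (-((x - ρ * u) / s) ^ 2 / 2)) *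
            ((Real.sqrt (2 * π))⁻¹ * Real.exp (-u ^ 2 / 2))
        = (ρ * x - u) * ((Real.sqrt (2 * π))⁻¹ * (Real.sqrt (2 * π))⁻¹) *
            (Real.exp (-((x - ρ * u) / s) ^ 2 / 2) * Real.exp (-u ^ 2 / 2)) := by ring
      _ = (ρ * x - u) * (2 * π)⁻¹ * Real.exp (-x ^ 2 / 2 + -b * (u - ρ * x) ^ 2) := by
            rw [hsqrt, ← Real.exp_add, hexp]
      _ = C * ((ρ * x - u) * Real.exp (-b * (u - ρ * x) ^ 2)) := by
            rw [hC, Real.exp_add]; ring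
  -- F has the integrand as derivative
  have hderiv : ∀ u : ℝ,
      HasDerivAt F ((ρ * x - u) * stdNormalPDF ((x - ρ * u) / s) * stdNormalPDF u) u := by
    intro u
    have h0 : HasDerivAt (fun u : ℝ => -b * (u - ρ * x) ^ 2)
        (-b * ((2 : ℕ) * (u - ρ * x) ^ 1 * 1)) u :=
      (((hasDerivAt_id u).sub_const (ρ * x)).pow 2).const_mul (-b)
    have h1' := (h0.exp).const_mul ((1 - ρ ^ 2) * C)
    refine h1'.congr_deriv ?_
    rw [hpt u, hb]
    field_simp
    ring
  -- integrability
  have hint : IntegrableOn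
      (fun u => (ρ * x - u) * stdNormalPDF ((x - ρ * u) / s) * stdNormalPDF u)
      (Set.Iic (ystar ρ x)) := by
    have h1' : Integrable (fun u : ℝ => (u - ρ * x) * Real.exp (-b * (u - ρ * x) ^ 2)) := by
      have := (integrable_mul_exp_neg_mul_sq hbpos).comp_sub_right (ρ * x)
      simpa using this
    have h2' := h1'.const_mul (-C)
    have h3' : Integrable (fun u : ℝ =>
        (ρ * x - u) * stdNormalPDF ((x - ρ * u) / s) * stdNormalPDF u) := by
      refine h2'.congr (Filter.Eventually.of_forall fun u => ?_)
      show -C * ((u - ρ * x) * Real.exp (-b * (u - ρ * x) ^ 2))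
          = (ρ * x - u) * stdNormalPDF ((x - ρ * u) / s) * stdNormalPDF u
      rw [hpt u]; ring
    exact h3'.integrableOn
  -- limit at -∞
  have htend : Filter.Tendsto F Filter.atBot (nhds 0) := by
    have ha : Filter.Tendsto (fun u : ℝ => u - ρ * x) Filter.atBot Filter.atBot :=
      Filter.tendsto_atBot_add_const_right _ _ Filter.tendsto_id
    have hb' : Filter.Tendsto (fun u : ℝ => (u - ρ * x) ^ 2) Filter.atBot Filter.atTop := by
      have habs := Filter.tendsto_abs_atBot_atTop.comp ha
      have := (Filter.tendsto_pow_atTop (two_ne_zero)).comp habs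
      refine this.congr fun u => ?_
      simp [sq_abs]
    have hc : Filter.Tendsto (fun u : ℝ => -b * (u - ρ * x) ^ 2) Filter.atBot Filter.atBot := by
      have := Filter.tendsto_neg_atTop_atBot.comp (hb'.const_mul_atTop hbpos)
      refine this.congr fun u => by simp
    have hd := Real.tendsto_exp_atBot.comp hc
    have := hd.const_mul ((1 - ρ ^ 2) * C)
    simpa [hF] using this
  have key := integral_Iic_of_hasDerivAt_of_tendsto' (a := ystar ρ x)
      (fun u _ => hderiv u) hint htend
  rw [key, sub_zero, hF]
  -- final algebra
  have ht2 : (1 - s) ^ 2 = 2 * (1 - s) - ρ ^ 2 := by linear_combination hssq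
  have hrpow : (1 - ρ ^ 2) ^ (-(3:ℝ) / 2) * (1 - ρ ^ 2)
      = (1 - ρ ^ 2) ^ (-(1:ℝ) / 2) := by
    nth_rewrite 2 [← Real.rpow_one (1 - ρ ^ 2)]
    rw [← Real.rpow_add hs2]
    norm_num
  have hexp2 : -x ^ 2 / 2 + -b * (ystar ρ x - ρ * x) ^ 2 = -x ^ 2 * hfun ρ := by
    rw [ystar, hfun, hb, ← hs]
    field_simp
    linear_combination (-x ^ 2) * hssq
  calc (1 - ρ ^ 2) ^ (-(3:ℝ) / 2) *
        ((1 - ρ ^ 2) * C * Real.exp (-b * (ystar ρ x - ρ * x) ^ 2))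
      = ((1 - ρ ^ 2) ^ (-(3:ℝ) / 2) * (1 - ρ ^ 2)) * ((2 * π)⁻¹ *
          (Real.exp (-x ^ 2 / 2) * Real.exp (-b * (ystar ρ x - ρ * x) ^ 2))) := by
        rw [hC]; ring
    _ = (2 * π)⁻¹ * (1 - ρ ^ 2) ^ (-(1:ℝ) / 2) * Real.exp (-x ^ 2 * hfun ρ) := by
        rw [hrpow, ← Real.exp_add, hexp2]; ring
end

section
/- For each fixed x ∈ ℝ, the function ρ ↦ (1/(Φ(x)(1−Φ(x)))) · |∫_{−∞}^{y*(ρ)} Φ((x − ρu)/√(1−ρ²)) φ(u) du − Φ(x)Φ(y*(ρ))|, where y*(ρ) = x(1 − √(1−ρ²))/ρ, is strictly increasing on (0,1). Equivalently, for a bivariate standard normal pair with correlation ρ, the Kolmogorov dependence statistic k(x) = sup_y |P(Y ≤ y | X > x) − P(Y ≤ y | X ≤ x)| is a strictly increasing function of |ρ| on (0,1). -/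
open MeasureTheory Real

/-- The signed quantity
`(Φ(x)(1−Φ(x)))⁻¹ (∫_{−∞}^{y*(ρ)} Φ((x − ρu)/√(1−ρ²)) φ(u) du − Φ(x)Φ(y*(ρ)))`. -/
noncomputable def kappaSigned (x ρ : ℝ) : ℝ :=
  (stdNormalCDF x * (1 - stdNormalCDF x))⁻¹ *
    ((∫ u in Set.Iic (ystar ρ x),
        stdNormalCDF ((x - ρ * u) / Real.sqrt (1 - ρ ^ 2)) * stdNormalPDF u)
      - stdNormalCDF x * stdNormalCDF (ystar ρ x))

/-- `κ(ρ) = (Φ(x)(1−Φ(x)))⁻¹ |∫_{−∞}^{y*(ρ)} Φ((x − ρu)/√(1−ρ²)) φ(u) du − Φ(x)Φ(y*(ρ))|`. -/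
noncomputable def kappaAbs (x ρ : ℝ) : ℝ :=
  (stdNormalCDF x * (1 - stdNormalCDF x))⁻¹ *
    |(∫ u in Set.Iic (ystar ρ x),
        stdNormalCDF ((x - ρ * u) / Real.sqrt (1 - ρ ^ 2)) * stdNormalPDF u)
      - stdNormalCDF x * stdNormalCDF (ystar ρ x)|

open Set

namespace SN

local notation "P" => stdNormalPDF
local notation "C" => stdNormalCDF



lemma P_pos (u : ℝ) : 0 < P u := by
  unfold stdNormalPDF
  positivity

lemma P_nonneg (u : ℝ) : 0 ≤ P u := (P_pos u).le

lemma P_even (u : ℝ) : P (-u) = P u := by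
  unfold stdNormalPDF; rw [neg_pow]; norm_num

lemma P_le_one (u : ℝ) : P u ≤ 1 := by
  unfold stdNormalPDF
  have h1 : Real.exp (-u ^ 2 / 2) ≤ 1 := by
    rw [Real.exp_le_one_iff]
    nlinarith [sq_nonneg u]
  have h2 : (Real.sqrt (2 * π))⁻¹ ≤ 1 := by
    rw [inv_le_one_iff₀]
    right
    rw [show (1:ℝ) = Real.sqrt 1 by simp]
    exact Real.sqrt_le_sqrt (by nlinarith [Real.pi_gt_three])
  calc (Real.sqrt (2 * π))⁻¹ * Real.exp (-u ^ 2 / 2) ≤ 1 * 1 := by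
        apply mul_le_mul h2 h1 (Real.exp_nonneg _) zero_le_one
    _ = 1 := by ring

lemma measurable_P : Measurable P := by
  unfold stdNormalPDF; fun_prop

lemma integrable_P : Integrable P := by
  unfold stdNormalPDF
  have : Integrable (fun u : ℝ => Real.exp (-(1/2 : ℝ) * u ^ 2)) :=
    integrable_exp_neg_mul_sq (by norm_num)
  have h := this.const_mul (Real.sqrt (2 * π))⁻¹
  refine h.congr (Filter.Eventually.of_forall fun u => ?_)
  ring_nf

lemma integral_P : ∫ u, P u = 1 := by
  unfold stdNormalPDF
  rw [integral_const_mul]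
  have : (fun u : ℝ => Real.exp (-u ^ 2 / 2)) = fun u : ℝ => Real.exp (-(1/2 : ℝ) * u ^ 2) := by
    funext u; ring_nf
  rw [this, integral_gaussian]
  rw [show π / (1/2 : ℝ) = 2 * π by ring]
  rw [inv_mul_cancel₀]
  positivity





lemma C_nonneg (x : ℝ) : 0 ≤ C x :=
  setIntegral_nonneg measurableSet_Iic fun u _ => P_nonneg u

lemma C_pos (x : ℝ) : 0 < C x := by
  unfold stdNormalCDF
  rw [setIntegral_pos_iff_support_of_nonneg_ae
    (Filter.Eventually.of_forall fun u => P_nonneg u) integrable_P.integrableOn]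
  have : Function.support P = Set.univ := by
    ext u; simp [Function.mem_support, (P_pos u).ne']
  rw [this, Set.univ_inter]
  simp [Real.volume_Iic]

lemma C_mono : Monotone C := fun a b hab =>
  setIntegral_mono_set integrable_P.integrableOn
    (Filter.Eventually.of_forall fun u => P_nonneg u)
    (HasSubset.Subset.eventuallyLE (Iic_subset_Iic.mpr hab))

lemma measurable_C : Measurable C := C_mono.measurable

lemma C_diff {a b : ℝ} (hab : a ≤ b) : ∫ u in Set.Ioc a b, P u = C b - C a := by
  have h1 : Set.Iic a ⊆ Set.Iic b := Iic_subset_Iic.mpr hab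
  have := integral_diff (f := P) (μ := volume) measurableSet_Iic
    integrable_P.integrableOn h1
  rw [show Set.Iic b \ Set.Iic a = Set.Ioc a b by ext; simp [and_comm]] at this
  unfold stdNormalCDF
  linarith [this]

lemma C_strictMono : StrictMono C := by
  intro a b hab
  have h : 0 < ∫ u in Set.Ioc a b, P u := by
    rw [setIntegral_pos_iff_support_of_nonneg_ae
      (Filter.Eventually.of_forall fun u => P_nonneg u) integrable_P.integrableOn]
    have : Function.support P = Set.univ := by
      ext u; simp [Function.mem_support, (P_pos u).ne']
    rw [this, Set.univ_inter, Real.volume_Ioc]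
    simp [hab]
  have := C_diff hab.le
  linarith

lemma C_compl (x : ℝ) : ∫ u in Set.Ioi x, P u = 1 - C x := by
  have := integral_add_compl (f := P) (μ := volume) (s := Set.Iic x) measurableSet_Iic integrable_P
  rw [Set.compl_Iic] at this
  unfold stdNormalCDF
  rw [← integral_P]
  linarith [this]

lemma C_lt_one (x : ℝ) : C x < 1 := by
  have h : 0 < ∫ u in Set.Ioi x, P u := by
    rw [setIntegral_pos_iff_support_of_nonneg_ae
      (Filter.Eventually.of_forall fun u => P_nonneg u) integrable_P.integrableOn]
    have : Function.support P = Set.univ := by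
      ext u; simp [Function.mem_support, (P_pos u).ne']
    rw [this, Set.univ_inter]
    simp [Real.volume_Ioi]
  linarith [C_compl x]

lemma C_le_one (x : ℝ) : C x ≤ 1 := (C_lt_one x).le

lemma C_neg (x : ℝ) : C (-x) = 1 - C x := by
  unfold stdNormalCDF
  have h1 : ∫ u in Set.Iic (-x), P u = ∫ u in Set.Ioi x, P u := by
    calc ∫ u in Set.Iic (-x), P u = ∫ u in Set.Iic (-x), P (-u) :=
          setIntegral_congr_fun measurableSet_Iic fun u _ => (P_even u).symm
      _ = ∫ u in Set.Ioi x, P u := by simpa using integral_comp_neg_Iic (-x) P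
  rw [h1]
  have := C_compl x
  unfold stdNormalCDF at this
  linarith



/-- bounded measurable times P is integrable (on any measure restricted from volume) -/
lemma integrable_mul_P {f : ℝ → ℝ} (hf : Measurable f) (hb : ∀ u, |f u| ≤ 1) (s : Set ℝ) :
    Integrable (fun u => f u * P u) (volume.restrict s) :=
  Integrable.bdd_mul (c := 1) integrable_P.restrict hf.aestronglyMeasurable.restrict
    (Filter.Eventually.of_forall fun u => by simpa using hb u)

lemma measurable_comp_affine (c d : ℝ) : Measurable (fun u : ℝ => C ((c - d * u) / Real.sqrt (1 - d^2))) := by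
  exact measurable_C.comp (by fun_prop)

/-- The Gaussian scaling integral: ∫ w, P ((w - c)/a) dw = a for a > 0. -/
lemma gauss_shift {a : ℝ} (ha : 0 < a) (c : ℝ) : ∫ w, P ((w - c) / a) = a := by
  have h1 : ∫ w, P ((w - c) / a) = ∫ w, P (w / a) := by
    exact integral_sub_right_eq_self (fun w => P (w / a)) c
  rw [h1]
  rw [MeasureTheory.Measure.integral_comp_div (g := P) (a := a), integral_P,
    abs_of_pos ha, smul_eq_mul, mul_one]




lemma integrable_P_affine {a : ℝ} (ha : 0 < a) (c : ℝ) :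
    Integrable (fun w : ℝ => P ((w - c) / a)) :=
  (integrable_P.comp_div ha.ne').comp_sub_right c

lemma factor {a b : ℝ} (ha : 0 < a) (hab : a ^ 2 + b ^ 2 = 1) (z w : ℝ) :
    P ((z - b * w) / a) * P w = P z * P ((w - b * z) / a) := by
  have hexp : ((z - b * w) / a) ^ 2 + w ^ 2 = z ^ 2 + ((w - b * z) / a) ^ 2 := by
    field_simp
    nlinarith [hab, sq_nonneg z, sq_nonneg w]
  unfold stdNormalPDF
  rw [mul_mul_mul_comm, ← Real.exp_add, mul_mul_mul_comm, ← Real.exp_add]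
  congr 1
  rw [Real.exp_eq_exp]
  linarith [hexp]

lemma C_abs_le (t : ℝ) : |C t| ≤ 1 := by
  rw [abs_of_nonneg (C_nonneg t)]; exact C_le_one t

/-- The convolution identity: `∫ w, Φ((x - b w)/a) φ(w) dw = Φ(x)` when `a² + b² = 1`. -/
lemma conv (x : ℝ) {a b : ℝ} (ha : 0 < a) (hb : 0 < b) (hab : a ^ 2 + b ^ 2 = 1) :
    ∫ w, C ((x - b * w) / a) * P w = C x := by
  classical
  set H : ℝ × ℝ → ℝ := fun p =>
    Set.indicator {q : ℝ × ℝ | q.1 ≤ x} (fun q => P q.1 * P ((q.2 - b * q.1) / a)) p with hHdef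
  have hHapp : ∀ z w : ℝ, H (z, w) = Set.indicator (Set.Iic x)
      (fun z => P z * P ((w - b * z) / a)) z := by
    intro z w
    simp only [hHdef, Set.indicator_apply, Set.mem_setOf_eq, Set.mem_Iic]
  have hHnonneg : ∀ p, 0 ≤ H p := by
    intro p
    apply Set.indicator_nonneg
    intro q _
    exact mul_nonneg (P_nonneg _) (P_nonneg _)
  have hHmeas : Measurable H := by
    apply Measurable.indicator
    · exact (measurable_P.comp measurable_fst).mul (measurable_P.comp (by fun_prop))
    · exact measurableSet_le measurable_fst measurable_const
  have hinner : ∀ z, (∫ w, H (z, w)) = Set.indicator (Set.Iic x) (fun z => P z * a) z := by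
    intro z
    by_cases hz : z ≤ x
    · have h1 : (fun w => H (z, w)) = fun w => P z * P ((w - b * z) / a) := by
        funext w; rw [hHapp, Set.indicator_of_mem (Set.mem_Iic.mpr hz)]
      rw [h1, MeasureTheory.integral_const_mul, gauss_shift ha (b * z),
        Set.indicator_of_mem (Set.mem_Iic.mpr hz)]
    · have h1 : (fun w => H (z, w)) = fun _ => (0 : ℝ) := by
        funext w; rw [hHapp, Set.indicator_of_notMem (fun hc => hz (Set.mem_Iic.mp hc))]
      rw [h1, integral_zero, Set.indicator_of_notMem (fun hc => hz (Set.mem_Iic.mp hc))]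
  have hHint : Integrable H (volume.prod volume) := by
    refine (integrable_prod_iff hHmeas.aestronglyMeasurable).mpr ⟨?_, ?_⟩
    · refine Filter.Eventually.of_forall fun z => ?_
      by_cases hz : z ≤ x
      · have h1 : (fun w => H (z, w)) = fun w => P z * P ((w - b * z) / a) := by
          funext w; rw [hHapp, Set.indicator_of_mem (Set.mem_Iic.mpr hz)]
        rw [h1]
        exact (integrable_P_affine ha (b * z)).const_mul _
      · have h1 : (fun w => H (z, w)) = fun _ => (0 : ℝ) := by
          funext w; rw [hHapp, Set.indicator_of_notMem (fun hc => hz (Set.mem_Iic.mp hc))]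
        rw [h1]
        exact integrable_zero _ _ _
    · have h1 : (fun z => ∫ w, ‖H (z, w)‖) = fun z =>
          Set.indicator (Set.Iic x) (fun z => P z * a) z := by
        funext z
        rw [← hinner z]
        congr 1
        funext w
        exact Real.norm_of_nonneg (hHnonneg _)
      rw [h1]
      exact ((integrable_P.mul_const a).indicator measurableSet_Iic)
  have hstep : ∀ w, C ((x - b * w) / a) * P w = a⁻¹ * ∫ z, H (z, w) := by
    intro w
    have hA : ∀ u : ℝ, Set.indicator (Set.Iic ((x - b * w) / a)) P u
        = Set.indicator (Set.Iic x) (fun z => P ((z - b * w) / a)) (a * u + b * w) := by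
      intro u
      by_cases h : u ≤ (x - b * w) / a
      · rw [Set.indicator_of_mem (Set.mem_Iic.mpr h), Set.indicator_of_mem
          (Set.mem_Iic.mpr (show a * u + b * w ≤ x by rw [le_div_iff₀ ha] at h; linarith))]
        congr 1
        field_simp
        ring
      · have h2 : ¬ a * u + b * w ≤ x := fun hc => h (by rw [le_div_iff₀ ha]; linarith)
        rw [Set.indicator_of_notMem (fun hc => h (Set.mem_Iic.mp hc)),
          Set.indicator_of_notMem (fun hc => h2 (Set.mem_Iic.mp hc))]
    have step1 : C ((x - b * w) / a) = a⁻¹ * ∫ z in Set.Iic x, P ((z - b * w) / a) := by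
      calc C ((x - b * w) / a) = ∫ u, Set.indicator (Set.Iic ((x - b * w) / a)) P u :=
            (integral_indicator measurableSet_Iic).symm
        _ = ∫ u, Set.indicator (Set.Iic x) (fun z => P ((z - b * w) / a)) (a * u + b * w) := by
            simp_rw [hA]
        _ = |a⁻¹| • ∫ y, Set.indicator (Set.Iic x) (fun z => P ((z - b * w) / a)) (y + b * w) :=
            MeasureTheory.Measure.integral_comp_mul_left
              (g := fun y => Set.indicator (Set.Iic x) (fun z => P ((z - b * w) / a)) (y + b * w))
              (a := a)
        _ = |a⁻¹| • ∫ y, Set.indicator (Set.Iic x) (fun z => P ((z - b * w) / a)) y := by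
            rw [integral_add_right_eq_self]
        _ = a⁻¹ * ∫ z in Set.Iic x, P ((z - b * w) / a) := by
            rw [integral_indicator measurableSet_Iic, abs_of_pos (inv_pos.mpr ha), smul_eq_mul]
    calc C ((x - b * w) / a) * P w
        = (a⁻¹ * ∫ z in Set.Iic x, P ((z - b * w) / a)) * P w := by rw [step1]
      _ = a⁻¹ * ((∫ z in Set.Iic x, P ((z - b * w) / a)) * P w) := by ring
      _ = a⁻¹ * ∫ z in Set.Iic x, P ((z - b * w) / a) * P w := by
          rw [MeasureTheory.integral_mul_const]
      _ = a⁻¹ * ∫ z in Set.Iic x, P z * P ((w - b * z) / a) := by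
          congr 1
          exact setIntegral_congr_fun measurableSet_Iic fun z _ => factor ha hab z w
      _ = a⁻¹ * ∫ z, H (z, w) := by
          congr 1
          rw [show (fun z => H (z, w)) = fun z => Set.indicator (Set.Iic x)
            (fun z => P z * P ((w - b * z) / a)) z from funext fun z => hHapp z w,
            integral_indicator measurableSet_Iic]
  have huncurry : Integrable (Function.uncurry fun z w => H (z, w)) (volume.prod volume) := by
    have : (Function.uncurry fun z w => H (z, w)) = H := by
      funext p; cases p; rfl
    rw [this]; exact hHint
  calc ∫ w, C ((x - b * w) / a) * P w = ∫ w, a⁻¹ * ∫ z, H (z, w) := by simp_rw [hstep]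
    _ = a⁻¹ * ∫ w, ∫ z, H (z, w) := MeasureTheory.integral_const_mul _ _
    _ = a⁻¹ * ∫ z, ∫ w, H (z, w) := by rw [(integral_integral_swap huncurry).symm]
    _ = a⁻¹ * ∫ z, Set.indicator (Set.Iic x) (fun z => P z * a) z := by simp_rw [hinner]
    _ = a⁻¹ * ∫ z in Set.Iic x, P z * a := by rw [integral_indicator measurableSet_Iic]
    _ = a⁻¹ * ((∫ z in Set.Iic x, P z) * a) := by rw [MeasureTheory.integral_mul_const]
    _ = C x := by
        unfold stdNormalCDF
        field_simp



/-- The key identity: the signed deviation at `y*` equals a one-sided integral. -/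
lemma key (x : ℝ) {a b : ℝ} (ha : 0 < a) (hb : 0 < b) (hab : a ^ 2 + b ^ 2 = 1) :
    (∫ u in Set.Iic (x * (1 - b) / a), C ((x - a * u) / b) * P u)
      - C x * C (x * (1 - b) / a)
    = ∫ w in Set.Ici x, C ((x - b * w) / a) * P w := by
  classical
  set y : ℝ := x * (1 - b) / a with hydef
  set F : ℝ × ℝ → ℝ := fun p =>
    Set.indicator {q : ℝ × ℝ | x ≤ q.2 ∧ b * q.2 + a * q.1 ≤ x}
      (fun q => P q.1 * P q.2) p with hFdef
  have hS : MeasurableSet {q : ℝ × ℝ | x ≤ q.2 ∧ b * q.2 + a * q.1 ≤ x} := by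
    have : {q : ℝ × ℝ | x ≤ q.2 ∧ b * q.2 + a * q.1 ≤ x}
        = {q : ℝ × ℝ | x ≤ q.2} ∩ {q : ℝ × ℝ | b * q.2 + a * q.1 ≤ x} := rfl
    rw [this]
    exact (measurableSet_le measurable_const measurable_snd).inter
      (measurableSet_le (by fun_prop) measurable_const)
  have hFapp : ∀ u w : ℝ, F (u, w) =
      if x ≤ w ∧ b * w + a * u ≤ x then P u * P w else 0 := by
    intro u w
    simp only [hFdef, Set.indicator_apply, Set.mem_setOf_eq]
  have hFint : Integrable F (volume.prod volume) :=
    (integrable_P.mul_prod integrable_P).indicator hS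
  -- inner integral in w, for fixed u
  have inner_u : ∀ u, (∫ w, F (u, w)) =
      Set.indicator (Set.Iic y) (fun v => (C ((x - a * v) / b) - C x) * P v) u := by
    intro u
    have hrw : (fun w => F (u, w)) =
        fun w => P u * Set.indicator (Set.Icc x ((x - a * u) / b)) P w := by
      funext w
      rw [hFapp]
      have hiff : (x ≤ w ∧ b * w + a * u ≤ x) ↔ (x ≤ w ∧ w ≤ (x - a * u) / b) :=
        ⟨fun ⟨h1, h2⟩ => ⟨h1, by rw [le_div_iff₀ hb]; linarith⟩,
         fun ⟨h1, h2⟩ => ⟨h1, by rw [le_div_iff₀ hb] at h2; linarith⟩⟩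
      by_cases h : x ≤ w ∧ b * w + a * u ≤ x
      · rw [if_pos h, Set.indicator_of_mem (Set.mem_Icc.mpr (hiff.mp h))]
      · rw [if_neg h, Set.indicator_of_notMem (fun hc => h (hiff.mpr (Set.mem_Icc.mp hc))),
          mul_zero]
    rw [hrw, MeasureTheory.integral_const_mul, integral_indicator measurableSet_Icc]
    by_cases hu : u ≤ y
    · have hxm : x ≤ (x - a * u) / b := by
        rw [le_div_iff₀ hb]
        have h1 : u * a ≤ x * (1 - b) := (le_div_iff₀ ha).mp hu
        nlinarith
      rw [integral_Icc_eq_integral_Ioc, C_diff hxm,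
        Set.indicator_of_mem (Set.mem_Iic.mpr hu)]
      ring
    · have hlt : (x - a * u) / b < x := by
        rw [div_lt_iff₀ hb]
        have h1 : x * (1 - b) < u * a := (div_lt_iff₀ ha).mp (not_le.mp hu)
        nlinarith
      rw [Set.Icc_eq_empty (not_le.mpr hlt), MeasureTheory.setIntegral_empty,
        Set.indicator_of_notMem (fun hc => hu (Set.mem_Iic.mp hc)), mul_zero]
  -- inner integral in u, for fixed w
  have inner_w : ∀ w, (∫ u, F (u, w)) =
      Set.indicator (Set.Ici x) (fun v => C ((x - b * v) / a) * P v) w := by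
    intro w
    have hrw : (fun u => F (u, w)) =
        fun u => Set.indicator (Set.Ici x) P w * Set.indicator (Set.Iic ((x - b * w) / a)) P u := by
      funext u
      rw [hFapp]
      have hiff : (x ≤ w ∧ b * w + a * u ≤ x) ↔ (x ≤ w ∧ u ≤ (x - b * w) / a) :=
        ⟨fun ⟨h1, h2⟩ => ⟨h1, by rw [le_div_iff₀ ha]; linarith⟩,
         fun ⟨h1, h2⟩ => ⟨h1, by rw [le_div_iff₀ ha] at h2; linarith⟩⟩
      by_cases h1 : x ≤ w <;> by_cases h2 : u ≤ (x - b * w) / a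
      · rw [if_pos (hiff.mpr ⟨h1, h2⟩), Set.indicator_of_mem (Set.mem_Ici.mpr h1),
          Set.indicator_of_mem (Set.mem_Iic.mpr h2), mul_comm]
      · rw [if_neg (fun hc => h2 (hiff.mp hc).2),
          Set.indicator_of_notMem (fun hc => h2 (Set.mem_Iic.mp hc)), mul_zero]
      · rw [if_neg (fun hc => h1 (hiff.mp hc).1),
          Set.indicator_of_notMem (fun hc => h1 (Set.mem_Ici.mp hc)), zero_mul]
      · rw [if_neg (fun hc => h1 (hiff.mp hc).1),
          Set.indicator_of_notMem (fun hc => h1 (Set.mem_Ici.mp hc)), zero_mul]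
    rw [hrw, MeasureTheory.integral_const_mul, integral_indicator measurableSet_Iic]
    by_cases h1 : x ≤ w
    · rw [Set.indicator_of_mem (Set.mem_Ici.mpr h1), Set.indicator_of_mem (Set.mem_Ici.mpr h1)]
      exact mul_comm _ _
    · rw [Set.indicator_of_notMem (fun hc => h1 (Set.mem_Ici.mp hc)),
        Set.indicator_of_notMem (fun hc => h1 (Set.mem_Ici.mp hc)), zero_mul]
  have huncurry : Integrable (Function.uncurry fun u w => F (u, w)) (volume.prod volume) := by
    have h : (Function.uncurry fun u w => F (u, w)) = F := by funext p; cases p; rfl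
    rw [h]; exact hFint
  -- integrability on LHS pieces
  have ig1 : Integrable (fun u => C ((x - a * u) / b) * P u) (volume.restrict (Set.Iic y)) := by
    apply integrable_mul_P
    · exact measurable_C.comp (by fun_prop)
    · intro u; exact C_abs_le _
  have ig2 : Integrable (fun u => C x * P u) (volume.restrict (Set.Iic y)) :=
    integrable_P.restrict.const_mul _
  have lhs1 : (∫ u in Set.Iic y, C ((x - a * u) / b) * P u) - C x * C y
      = ∫ u, ∫ w, F (u, w) := by
    have e1 : ∫ u, ∫ w, F (u, w)
        = ∫ u in Set.Iic y, (C ((x - a * u) / b) - C x) * P u := by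
      simp_rw [inner_u]
      exact integral_indicator measurableSet_Iic
    have e2 : ∫ u in Set.Iic y, (C ((x - a * u) / b) - C x) * P u
        = (∫ u in Set.Iic y, C ((x - a * u) / b) * P u) - ∫ u in Set.Iic y, C x * P u := by
      rw [← integral_sub ig1 ig2]
      congr 1
      funext u
      ring
    have e3 : ∫ u in Set.Iic y, C x * P u = C x * C y := by
      rw [MeasureTheory.integral_const_mul]; rfl
    rw [e1, e2, e3]
  have rhs1 : ∫ w, ∫ u, F (u, w) = ∫ w in Set.Ici x, C ((x - b * w) / a) * P w := by
    simp_rw [inner_w]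
    exact integral_indicator measurableSet_Ici
  rw [lhs1, integral_integral_swap huncurry, rhs1]



lemma integrable_CP (x : ℝ) {a b : ℝ} (ha : 0 < a) :
    Integrable (fun w => C ((x - b * w) / a) * P w) := by
  have := integrable_mul_P (f := fun w => C ((x - b * w) / a))
    (measurable_C.comp (by fun_prop)) (fun u => C_abs_le _) Set.univ
  simpa [Measure.restrict_univ] using this

lemma E_symm (x : ℝ) {a b : ℝ} (ha : 0 < a) (hb : 0 < b) (hab : a ^ 2 + b ^ 2 = 1) :
    ∫ w in Set.Ici (-x), C ((-x - b * w) / a) * P w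
      = ∫ w in Set.Ici x, C ((x - b * w) / a) * P w := by
  have h1 : ∫ w in Set.Ici (-x), C ((-x - b * w) / a) * P w
      = ∫ w in Set.Iic x, (1 - C ((x - b * w) / a)) * P w := by
    calc ∫ w in Set.Ici (-x), C ((-x - b * w) / a) * P w
        = ∫ w in Set.Ioi (-x), C ((-x - b * w) / a) * P w := integral_Ici_eq_integral_Ioi
      _ = ∫ w in Set.Ioi (-x), (fun v => C ((-x + b * v) / a) * P v) (-w) := by
          apply setIntegral_congr_fun measurableSet_Ioi
          intro w _
          simp only
          rw [P_even]
          congr 2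
          ring
      _ = ∫ v in Set.Iic x, C ((-x + b * v) / a) * P v := by
          simpa using integral_comp_neg_Ioi (-x) (fun v => C ((-x + b * v) / a) * P v)
      _ = ∫ w in Set.Iic x, (1 - C ((x - b * w) / a)) * P w := by
          apply setIntegral_congr_fun measurableSet_Iic
          intro w _
          simp only
          congr 1
          rw [show (-x + b * w) / a = -((x - b * w) / a) by ring, C_neg]
  have h2 : ∫ w in Set.Iic x, (1 - C ((x - b * w) / a)) * P w
      = C x - ∫ w in Set.Iic x, C ((x - b * w) / a) * P w := by
    have e : ∫ w in Set.Iic x, (1 - C ((x - b * w) / a)) * P w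
        = (∫ w in Set.Iic x, P w) - ∫ w in Set.Iic x, C ((x - b * w) / a) * P w := by
      rw [← integral_sub integrable_P.restrict (integrable_CP x ha).restrict]
      congr 1
      funext w
      ring
    rw [e]
    rfl
  have h3 : (∫ w in Set.Iic x, C ((x - b * w) / a) * P w)
      + ∫ w in Set.Ioi x, C ((x - b * w) / a) * P w = C x := by
    have := integral_add_compl (s := Set.Iic x) measurableSet_Iic (integrable_CP x (b := b) ha)
    rw [Set.compl_Iic] at this
    rw [this, conv x ha hb hab]
  rw [h1, h2, integral_Ici_eq_integral_Ioi]
  linarith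
lemma E_pos (x : ℝ) {a b : ℝ} (ha : 0 < a) :
    0 < ∫ w in Set.Ici x, C ((x - b * w) / a) * P w := by
  rw [setIntegral_pos_iff_support_of_nonneg_ae
    (Filter.Eventually.of_forall fun w => mul_nonneg (C_nonneg _) (P_nonneg _))
    (integrable_CP x ha).integrableOn]
  have hsupp : Function.support (fun w => C ((x - b * w) / a) * P w) = Set.univ := by
    ext w
    simp only [Function.mem_support, Set.mem_univ, iff_true]
    exact (mul_pos (C_pos _) (P_pos w)).ne'
  rw [hsupp, Set.univ_inter]
  simp [Real.volume_Ici]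

lemma arg_le {a₁ a₂ b₁ b₂ x w : ℝ} (ha₁ : 0 < a₁) (ha₂ : 0 < a₂) (h12 : a₁ < a₂)
    (hb₁ : 0 < b₁) (hb₂ : 0 < b₂) (hb₁1 : b₁ ≤ 1) (hb₂1 : b₂ ≤ 1)
    (hab₁ : a₁ ^ 2 + b₁ ^ 2 = 1) (hab₂ : a₂ ^ 2 + b₂ ^ 2 = 1) (hx : 0 ≤ x) (hw : x ≤ w) :
    (x - b₁ * w) / a₁ ≤ (x - b₂ * w) / a₂ := by
  have e : (a₂ * b₁ - a₁ * b₂) * (a₂ * b₁ + a₁ * b₂) = (a₂ - a₁) * (a₂ + a₁) := by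
    linear_combination a₂ ^ 2 * hab₁ - a₁ ^ 2 * hab₂
  have f2 : 0 < a₂ * b₁ + a₁ * b₂ := by positivity
  have hc : 0 < a₂ * b₁ - a₁ * b₂ := by nlinarith
  have f1 : a₂ * b₁ + a₁ * b₂ ≤ a₂ + a₁ := by nlinarith
  have hkey : a₂ - a₁ ≤ a₂ * b₁ - a₁ * b₂ := by nlinarith
  rw [div_le_div_iff₀ ha₁ ha₂]
  nlinarith [mul_le_mul_of_nonneg_left hkey hx, mul_le_mul_of_nonneg_right hw hc.le]

lemma arg_lt {a₁ a₂ b₁ b₂ x w : ℝ} (ha₁ : 0 < a₁) (ha₂ : 0 < a₂) (h12 : a₁ < a₂)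
    (hb₁ : 0 < b₁) (hb₂ : 0 < b₂) (hb₁1 : b₁ ≤ 1) (hb₂1 : b₂ ≤ 1)
    (hab₁ : a₁ ^ 2 + b₁ ^ 2 = 1) (hab₂ : a₂ ^ 2 + b₂ ^ 2 = 1) (hx : 0 ≤ x) (hw : x < w) :
    (x - b₁ * w) / a₁ < (x - b₂ * w) / a₂ := by
  have e : (a₂ * b₁ - a₁ * b₂) * (a₂ * b₁ + a₁ * b₂) = (a₂ - a₁) * (a₂ + a₁) := by
    linear_combination a₂ ^ 2 * hab₁ - a₁ ^ 2 * hab₂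
  have f2 : 0 < a₂ * b₁ + a₁ * b₂ := by positivity
  have hc : 0 < a₂ * b₁ - a₁ * b₂ := by nlinarith
  have f1 : a₂ * b₁ + a₁ * b₂ ≤ a₂ + a₁ := by nlinarith
  have hkey : a₂ - a₁ ≤ a₂ * b₁ - a₁ * b₂ := by nlinarith
  rw [div_lt_div_iff₀ ha₁ ha₂]
  nlinarith [mul_le_mul_of_nonneg_left hkey hx, mul_lt_mul_of_pos_right hw hc]

lemma E_mono {x : ℝ} (hx : 0 ≤ x) {a₁ a₂ b₁ b₂ : ℝ} (ha₁ : 0 < a₁) (ha₂ : 0 < a₂)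
    (h12 : a₁ < a₂) (hb₁ : 0 < b₁) (hb₂ : 0 < b₂) (hb₁1 : b₁ ≤ 1) (hb₂1 : b₂ ≤ 1)
    (hab₁ : a₁ ^ 2 + b₁ ^ 2 = 1) (hab₂ : a₂ ^ 2 + b₂ ^ 2 = 1) :
    (∫ w in Set.Ici x, C ((x - b₁ * w) / a₁) * P w)
      < ∫ w in Set.Ici x, C ((x - b₂ * w) / a₂) * P w := by
  rw [← sub_pos, ← integral_sub (integrable_CP x ha₂).integrableOn
    (integrable_CP x ha₁).integrableOn]
  set g : ℝ → ℝ := fun w => C ((x - b₂ * w) / a₂) * P w - C ((x - b₁ * w) / a₁) * P w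
    with hgdef
  rw [setIntegral_pos_iff_support_of_nonneg_ae]
  · have hsub : Set.Ioi x ⊆ Function.support g ∩ Set.Ici x := by
      intro w hw
      have hlt := arg_lt ha₁ ha₂ h12 hb₁ hb₂ hb₁1 hb₂1 hab₁ hab₂ hx (Set.mem_Ioi.mp hw)
      refine ⟨?_, le_of_lt (Set.mem_Ioi.mp hw)⟩
      have : C ((x - b₁ * w) / a₁) * P w < C ((x - b₂ * w) / a₂) * P w :=
        mul_lt_mul_of_pos_right (C_strictMono hlt) (P_pos w)
      simp only [Function.mem_support, hgdef]
      intro hzero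
      rw [sub_eq_zero] at hzero
      exact absurd hzero (ne_of_gt this)
    calc (0 : ENNReal) < volume (Set.Ioi x) := by simp [Real.volume_Ioi]
      _ ≤ volume (Function.support g ∩ Set.Ici x) := measure_mono hsub
  · rw [Filter.EventuallyLE, ae_restrict_iff' measurableSet_Ici]
    refine Filter.Eventually.of_forall fun w hw => ?_
    have hle := arg_le ha₁ ha₂ h12 hb₁ hb₂ hb₁1 hb₂1 hab₁ hab₂ hx (Set.mem_Ici.mp hw)
    simp only [hgdef, Pi.zero_apply]
    exact sub_nonneg.mpr (mul_le_mul_of_nonneg_right (C_mono hle) (P_nonneg w))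
  · exact ((integrable_CP x ha₂).sub (integrable_CP x ha₁)).integrableOn




lemma kappaAbs_eq (x : ℝ) {ρ : ℝ} (hρ : 0 < ρ) (hρ1 : ρ < 1) :
    kappaAbs x ρ = (C x * (1 - C x))⁻¹ *
      ∫ w in Set.Ici |x|, C ((|x| - Real.sqrt (1 - ρ ^ 2) * w) / ρ) * P w := by
  have h1 : (0:ℝ) < 1 - ρ ^ 2 := by nlinarith
  have hb : 0 < Real.sqrt (1 - ρ ^ 2) := Real.sqrt_pos.mpr h1
  have hb2 : Real.sqrt (1 - ρ ^ 2) ^ 2 = 1 - ρ ^ 2 := Real.sq_sqrt h1.le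
  have hab : ρ ^ 2 + Real.sqrt (1 - ρ ^ 2) ^ 2 = 1 := by rw [hb2]; ring
  have hkey := key x hρ hb hab
  unfold kappaAbs ystar
  rw [hkey, abs_of_pos (E_pos x hρ)]
  rcases le_or_gt 0 x with hx | hx
  · rw [abs_of_nonneg hx]
  · rw [abs_of_neg hx, ← E_symm x hρ hb hab]



end SN

/-- For each fixed `x ∈ ℝ`, the function
`ρ ↦ (Φ(x)(1−Φ(x)))⁻¹ |∫_{−∞}^{y*(ρ)} Φ((x − ρu)/√(1−ρ²)) φ(u) du − Φ(x)Φ(y*(ρ))|`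
is strictly increasing on `(0,1)`; equivalently, the Kolmogorov dependence statistic of a
bivariate standard normal pair with correlation `ρ` is strictly increasing in `|ρ|` on
`(0,1)`. -/
theorem stmt14 (x : ℝ) : StrictMonoOn (kappaAbs x) (Set.Ioo (0 : ℝ) 1) := by
  intro ρ₁ hρ₁ ρ₂ hρ₂ h12
  obtain ⟨h1a, h1b⟩ := hρ₁
  obtain ⟨h2a, h2b⟩ := hρ₂
  rw [SN.kappaAbs_eq x h1a h1b, SN.kappaAbs_eq x h2a h2b]
  have hc : (0:ℝ) < (stdNormalCDF x * (1 - stdNormalCDF x))⁻¹ :=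
    inv_pos.mpr (mul_pos (SN.C_pos x) (sub_pos.mpr (SN.C_lt_one x)))
  apply mul_lt_mul_of_pos_left _ hc
  have h11 : (0:ℝ) < 1 - ρ₁ ^ 2 := by nlinarith
  have h21 : (0:ℝ) < 1 - ρ₂ ^ 2 := by nlinarith
  exact SN.E_mono (abs_nonneg x) h1a h2a h12
    (Real.sqrt_pos.mpr h11) (Real.sqrt_pos.mpr h21)
    (Real.sqrt_le_one.mpr (by nlinarith)) (Real.sqrt_le_one.mpr (by nlinarith))
    (by rw [Real.sq_sqrt h11.le]; ring) (by rw [Real.sq_sqrt h21.le]; ring)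
end
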